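/- Let Γ be a quotient of S^LMC, equipped with the quotient topology. Then the map γ : S^LMC → Γ, sending each p̃ ∈ S^LMC to the unique member of Γ contained in p̃, is a topological quotient map. -/

import Mathlib

open Set Topology WeakDual BoundedContinuousFunction

noncomputable section

variable (S : Type*) [TopologicalSpace S] [T2Space S] [Semigroup S]

/-- Left translation `λ_s`, as a continuous map, given continuity of left translations. -/
def lamC (hl : ∀ s : S, Continuous (fun t => s * t)) (s : S) : C(S, S) :=
  ⟨fun t => s * t, hl s⟩

/-- An m-admissible subalgebra of `CB(S) = S →ᵇ ℂ`. -/
structure MAdmissible (hl : ∀ s : S, Continuous (fun t => s * t)) : Type _ where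
  carrier : StarSubalgebra ℂ (S →ᵇ ℂ)
  isClosed' : IsClosed (carrier : Set (S →ᵇ ℂ))
  leftInvariant : ∀ (s : S), ∀ f ∈ carrier, f.compContinuous (lamC S hl s) ∈ carrier
  mAdmissible : ∀ (μ : characterSpace ℂ carrier) (f : S →ᵇ ℂ) (hf : f ∈ carrier),
    ∃ g ∈ carrier, ∀ s : S,
      g s = μ ⟨f.compContinuous (lamC S hl s), leftInvariant s f hf⟩

variable {hl : ∀ s : S, Continuous (fun t => s * t)}

/-- The spectrum `S^F` of an m-admissible subalgebra. -/
abbrev specF (F : MAdmissible S hl) : Type _ := characterSpace ℂ F.carrier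

/-- Evaluation at a point, as an algebra homomorphism on `F`. -/
def evalHom (F : MAdmissible S hl) (s : S) : F.carrier →ₐ[ℂ] ℂ where
  toFun f := (f : S →ᵇ ℂ) s
  map_one' := rfl
  map_mul' _ _ := rfl
  map_zero' := rfl
  map_add' _ _ := rfl
  commutes' _ := rfl

/-- The evaluation map `ε : S → S^F`. -/
def epsF (F : MAdmissible S hl) (s : S) : specF S F :=
  haveI : CompleteSpace F.carrier := IsClosed.completeSpace_coe (hs := F.isClosed')
  CharacterSpace.equivAlgHom.symm (evalHom S F s)

variable (F : MAdmissible S hl)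

/-- `Z(F)`: the collection of zero sets of members of `F`. -/
def ZSet : Set (Set S) := {A | ∃ f ∈ F.carrier, A = {s : S | f s = 0}}

/-- z-filters on `F`. -/
def IsZFilter (𝒜 : Set (Set S)) : Prop :=
  𝒜 ⊆ ZSet S F ∧ ∅ ∉ 𝒜 ∧ Set.univ ∈ 𝒜 ∧
    (∀ A ∈ 𝒜, ∀ B ∈ 𝒜, A ∩ B ∈ 𝒜) ∧
    ∀ A ∈ 𝒜, ∀ B ∈ ZSet S F, A ⊆ B → B ∈ 𝒜

/-- `FS`: the collection of z-ultrafilters on `F`. -/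
def zUltra : Set (Set (Set S)) :=
  {p | IsZFilter S F p ∧ ∀ q, IsZFilter S F q → p ⊆ q → q = p}

/-- `cl ε(A)` in `S^F`. -/
def epsCl (A : Set S) : Set (specF S F) := closure (epsF S F '' A)

/-- `⋂_{A ∈ p} cl ε(A)`; for `p ∈ FS` this is the singleton of the corresponding point of `S^F`. -/
def core (p : Set (Set S)) : Set (specF S F) := ⋂ A ∈ p, epsCl S F A

/-- `p̃ = ⋂ [p]`, the intersection of the equivalence class of `p`. -/
def tilde (p : Set (Set S)) : Set (Set S) :=
  ⋂₀ {q | q ∈ zUltra S F ∧ core S F q = core S F p}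

/-- pure z-filters. -/
def IsPure (𝒜 : Set (Set S)) : Prop :=
  IsZFilter S F 𝒜 ∧ ∀ p ∈ zUltra S F, 𝒜 ⊆ p → 𝒜 ⊆ tilde S F p

/-- `bar(𝒜) = {p̃ : 𝒜 ⊆ p}`, viewed as a subset of `S^F` via the identification of
`p̃` with the point `μ` such that `⋂_{A ∈ p} cl ε(A) = {μ}`. -/
def barSet (𝒜 : Set (Set S)) : Set (specF S F) :=
  {μ | ∃ p ∈ zUltra S F, 𝒜 ⊆ p ∧ core S F p = {μ}}

/-- `𝒜° = {A ∈ 𝒜 : bar(𝒜) ⊆ int cl ε(A)}`. -/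
def circA (𝒜 : Set (Set S)) : Set (Set S) :=
  {A ∈ 𝒜 | barSet S F 𝒜 ⊆ interior (epsCl S F A)}

/-- `⋂ J`, the intersection of the z-filters `p̃` corresponding to points of `J ⊆ S^F`. -/
def interOf (J : Set (specF S F)) : Set (Set S) :=
  ⋂₀ {C | ∃ p ∈ zUltra S F, ∃ μ ∈ J, core S F p = {μ} ∧ C = tilde S F p}

/-- `⋂ [p̃]_R` for a relation `r` on `S^F`. -/
def classInter (r : specF S F → specF S F → Prop) (μ : specF S F) : Set (Set S) :=
  interOf S F {ν | r μ ν}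

/-- `Ω_ℬ(A) = {x ∈ S : λ_x⁻¹(A) ∈ ℬ}`. -/
def OmegaZ (ℬ : Set (Set S)) (A : Set S) : Set S := {x : S | (fun t => x * t) ⁻¹' A ∈ ℬ}

/-- `𝒜 + ℬ`. -/
def zsum (𝒜 ℬ : Set (Set S)) : Set (Set S) :=
  {A ∈ ZSet S F | ∀ F' ∈ ZSet S F, OmegaZ S ℬ A ⊆ F' → F' ∈ 𝒜}

/-- `𝒜 ⊙ ℬ = ⋂ bar(𝒜 + ℬ)`. -/
def odot (𝒜 ℬ : Set (Set S)) : Set (Set S) :=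
  interOf S F (barSet S F (zsum S F 𝒜 ℬ))

/-- topological choice functions for a set `Γ` of z-filters. -/
def IsTCF (Γ : Set (Set (Set S))) (f : Set (Set S) → Set S) : Prop :=
  ∀ L ∈ Γ, f L ∈ L ∧ barSet S F L ⊆ interior (epsCl S F (f L))

/-- `A* = {𝓛 ∈ Γ : bar(𝓛) ∩ cl ε(A) ≠ ∅}`. -/
def starSet (Γ : Set (Set (Set S))) (A : Set S) : Set Γ :=
  {L : Γ | (barSet S F (L : Set (Set S)) ∩ epsCl S F A).Nonempty}

/-- `A_* = {𝓛 ∈ Γ : bar(𝓛) ⊆ cl ε(A)}`. -/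
def lowStar (Γ : Set (Set (Set S))) (A : Set S) : Set Γ :=
  {L : Γ | barSet S F (L : Set (Set S)) ⊆ epsCl S F A}

/-- The `τ*` quotient topology on `Γ`. -/
def tauStar (Γ : Set (Set (Set S))) : TopologicalSpace Γ :=
  TopologicalSpace.generateFrom {U | ∃ A ∈ ZSet S F, U = (starSet S F Γ A)ᶜ}

/-- The `τ_*` quotient topology on `Γ`. -/
def tauLow (Γ : Set (Set (Set S))) : TopologicalSpace Γ :=
  TopologicalSpace.generateFrom {U | ∃ A ∈ ZSet S F, U = (lowStar S F Γ A)ᶜ}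

/-- `Γ` is a quotient of `S^F`: conditions (a) and (b) of Theorem 3.9. -/
def IsQuotientOf (Γ : Set (Set (Set S))) : Prop :=
  (∀ L ∈ Γ, IsPure S F L) ∧
  (∀ f : Set (Set S) → Set S, IsTCF S F Γ f →
    ∃ 𝓕 : Finset (Set (Set S)), ↑𝓕 ⊆ Γ ∧
      (Set.univ : Set (specF S F)) = ⋃ L ∈ 𝓕, interior (epsCl S F (f L))) ∧
  (∀ L ∈ Γ, ∀ K ∈ Γ, L ≠ K →
    ∃ A ∈ circA S F L, ∃ B ∈ circA S F K, ∀ C ∈ Γ,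
      (∀ H ∈ ZSet S F, (interior (epsCl S F A))ᶜ ⊆ interior (epsCl S F H) → H ∈ C) ∨
      (∀ T ∈ ZSet S F, (interior (epsCl S F B))ᶜ ⊆ interior (epsCl S F T) → T ∈ C))

/-- The defining property of the map `γ : S^F → Γ` sending `p̃` to the unique member of `Γ`
contained in `p̃`. -/
def IsGamma (Γ : Set (Set (Set S))) (γ : specF S F → Γ) : Prop :=
  ∀ (μ : specF S F) (p : Set (Set S)), p ∈ zUltra S F → core S F p = {μ} →
    (γ μ : Set (Set S)) ⊆ tilde S F p

/-- The defining property of the multiplication of `S^F`: `(μν)(f) = μ(T_ν f)` where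
`(T_ν f)(s) = ν(L_s f)`. -/
def IsSpecMul (mul : specF S F → specF S F → specF S F) : Prop :=
  ∀ (μ ν : specF S F) (f : S →ᵇ ℂ) (hf : f ∈ F.carrier) (g : S →ᵇ ℂ) (hg : g ∈ F.carrier),
    (∀ s : S, g s = ν ⟨f.compContinuous (lamC S hl s), F.leftInvariant s f hf⟩) →
    mul μ ν ⟨f, hf⟩ = μ ⟨g, hg⟩

/-- `LMC(S)`, as a subset of `CB(S)`. -/
def LMCset (hl : ∀ s : S, Continuous (fun t => s * t)) : Set (S →ᵇ ℂ) :=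
  {f | ∀ μ : characterSpace ℂ (S →ᵇ ℂ),
    Continuous fun s : S => μ (f.compContinuous (lamC S hl s))}

/-! ### Auxiliary lemmas -/

section Aux

open TopologicalSpace

set_option linter.unusedSectionVars false

set_option synthInstance.maxHeartbeats 1000000 in
set_option maxHeartbeats 1000000 in
theorem specF_instances :
    CompactSpace (specF S F) ∧ NormalSpace (specF S F) := by
  haveI : IsClosed ((F.carrier : StarSubalgebra ℂ (S →ᵇ ℂ)) : Set (S →ᵇ ℂ)) := F.isClosed'
  haveI : CommCStarAlgebra F.carrier := inferInstance
  haveI : CompactSpace (specF S F) := inferInstance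
  haveI : NormalSpace (specF S F) := inferInstance
  exact ⟨‹_›, ‹_›⟩

theorem epsF_apply (s : S) (a : F.carrier) : epsF S F s a = (a : S →ᵇ ℂ) s := rfl

/-- Gelfand transform surjectivity for the closed star subalgebra `F`. -/
theorem gelfand_surj (g : C(specF S F, ℂ)) :
    ∃ f : F.carrier, ∀ μ : specF S F, μ f = g μ := by
  haveI : IsClosed ((F.carrier : StarSubalgebra ℂ (S →ᵇ ℂ)) : Set (S →ᵇ ℂ)) := F.isClosed'
  obtain ⟨a, ha⟩ := (gelfandTransform_bijective (A := F.carrier)).2 g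
  exact ⟨a, fun μ => by rw [← ha]; rfl⟩

theorem eps_dense : Dense (Set.range (epsF S F)) := by
  haveI : IsClosed ((F.carrier : StarSubalgebra ℂ (S →ᵇ ℂ)) : Set (S →ᵇ ℂ)) := F.isClosed'
  haveI := (specF_instances S F).1
  haveI := (specF_instances S F).2
  by_contra h
  rw [dense_iff_closure_eq] at h
  obtain ⟨μ, hμ⟩ := Set.ne_univ_iff_exists_notMem _ |>.mp h
  obtain ⟨g, hg0, hg1, -⟩ := exists_continuous_zero_one_of_isClosed
    isClosed_closure (isClosed_singleton (x := μ))
    (Set.disjoint_singleton_right.mpr hμ)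
  obtain ⟨f, hf⟩ := gelfand_surj S F
    ⟨fun x => (g x : ℂ), Complex.continuous_ofReal.comp g.continuous⟩
  have hf0 : (f : S →ᵇ ℂ) = 0 := by
    ext s
    have h1 : epsF S F s f = (g (epsF S F s) : ℂ) := hf (epsF S F s)
    have h2 : g (epsF S F s) = 0 := hg0 (subset_closure ⟨s, rfl⟩)
    rw [epsF_apply] at h1
    simp [h1, h2]
  have hzero : f = (0 : F.carrier) := Subtype.ext (by simpa using hf0)
  have h1 : μ f = (g μ : ℂ) := hf μ
  rw [hzero, map_zero, hg1 rfl] at h1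
  simp at h1

theorem univ_mem_ZSet : Set.univ ∈ ZSet S F := by
  refine ⟨0, zero_mem _, ?_⟩
  ext s
  simp

theorem inter_mem_ZSet {A B : Set S} (hA : A ∈ ZSet S F) (hB : B ∈ ZSet S F) :
    A ∩ B ∈ ZSet S F := by
  obtain ⟨f, hf, rfl⟩ := hA
  obtain ⟨g, hg, rfl⟩ := hB
  refine ⟨f * star f + g * star g,
    add_mem (mul_mem hf (star_mem hf)) (mul_mem hg (star_mem hg)), ?_⟩
  ext s
  simp only [Set.mem_inter_iff, Set.mem_setOf_eq, BoundedContinuousFunction.coe_add,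
    BoundedContinuousFunction.coe_mul, BoundedContinuousFunction.coe_star, Pi.add_apply,
    Pi.mul_apply, Pi.star_apply]
  simp only [RCLike.star_def, Complex.mul_conj, ← Complex.ofReal_add, Complex.ofReal_eq_zero]
  rw [add_eq_zero_iff_of_nonneg (Complex.normSq_nonneg _) (Complex.normSq_nonneg _)]
  simp only [Complex.normSq_eq_zero]

/-- Any z-filter extends to a z-ultrafilter. -/
theorem exists_ultra {L : Set (Set S)} (hL : IsZFilter S F L) :
    ∃ p ∈ zUltra S F, L ⊆ p := by
  have hz : ∀ c ⊆ {q | IsZFilter S F q}, IsChain (· ⊆ ·) c → c.Nonempty →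
      ∃ ub ∈ {q | IsZFilter S F q}, ∀ s ∈ c, s ⊆ ub := by
    intro c hcS hchain hcne
    refine ⟨⋃₀ c, ?_, fun s hs => Set.subset_sUnion_of_mem hs⟩
    obtain ⟨q₀, hq₀⟩ := hcne
    refine ⟨?_, ?_, ?_, ?_, ?_⟩
    · rintro A ⟨q, hq, hA⟩
      exact (hcS hq).1 hA
    · rintro ⟨q, hq, hA⟩
      exact (hcS hq).2.1 hA
    · exact ⟨q₀, hq₀, (hcS hq₀).2.2.1⟩
    · rintro A ⟨q1, hq1, hA⟩ B ⟨q2, hq2, hB⟩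
      rcases hchain.total hq1 hq2 with h | h
      · exact ⟨q2, hq2, (hcS hq2).2.2.2.1 A (h hA) B hB⟩
      · exact ⟨q1, hq1, (hcS hq1).2.2.2.1 A hA B (h hB)⟩
    · rintro A ⟨q, hq, hA⟩ B hBZ hAB
      exact ⟨q, hq, (hcS hq).2.2.2.2 A hA B hBZ hAB⟩
  obtain ⟨m, hLm, hmax⟩ := zorn_subset_nonempty {q | IsZFilter S F q} hz L hL
  exact ⟨m, ⟨hmax.1, fun q hq hmq => subset_antisymm (hmax.2 hq hmq) hmq⟩, hLm⟩

theorem core_eq_iInter (q : Set (Set S)) :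
    core S F q = ⋂ B : q, epsCl S F (B : Set S) := by
  simp [core, Set.iInter_coe_set]

theorem mem_core_iff {q : Set (Set S)} {x : specF S F} :
    x ∈ core S F q ↔ ∀ B ∈ q, x ∈ epsCl S F B := by
  simp [core]

theorem core_nonempty {q : Set (Set S)} (hq : IsZFilter S F q) :
    (core S F q).Nonempty := by
  haveI : IsClosed ((F.carrier : StarSubalgebra ℂ (S →ᵇ ℂ)) : Set (S →ᵇ ℂ)) := F.isClosed'
  haveI : Nonempty q := ⟨⟨Set.univ, hq.2.2.1⟩⟩
  rw [core_eq_iInter]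
  refine IsCompact.nonempty_iInter_of_directed_nonempty_isCompact_isClosed
    (fun B : q => epsCl S F (B : Set S)) ?_ ?_
    (fun B => isClosed_closure.isCompact) (fun B => isClosed_closure)
  · intro B C
    refine ⟨⟨(B : Set S) ∩ C, hq.2.2.2.1 B B.2 C C.2⟩, ?_, ?_⟩
    · exact closure_mono (Set.image_mono Set.inter_subset_left)
    · exact closure_mono (Set.image_mono Set.inter_subset_right)
  · intro B
    have hBne : (B : Set S).Nonempty := by
      rcases Set.eq_empty_or_nonempty (B : Set S) with h | h
      · exact absurd (h ▸ B.2) hq.2.1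
      · exact h
    exact (hBne.image _).closure

theorem exists_disjoint_of_core_disjoint {q : Set (Set S)} (hq : IsZFilter S F q)
    {A : Set (specF S F)} (hA : IsClosed A) (h : core S F q ∩ A = ∅) :
    ∃ B ∈ q, epsCl S F B ∩ A = ∅ := by
  haveI : IsClosed ((F.carrier : StarSubalgebra ℂ (S →ᵇ ℂ)) : Set (S →ᵇ ℂ)) := F.isClosed'
  by_contra hcon
  push_neg at hcon
  haveI : Nonempty q := ⟨⟨Set.univ, hq.2.2.1⟩⟩
  have hne : (⋂ B : q, (epsCl S F (B : Set S) ∩ A)).Nonempty := by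
    refine IsCompact.nonempty_iInter_of_directed_nonempty_isCompact_isClosed
      (fun B : q => epsCl S F (B : Set S) ∩ A) ?_ ?_
      (fun B => (isClosed_closure.inter hA).isCompact)
      (fun B => isClosed_closure.inter hA)
    · intro B C
      refine ⟨⟨(B : Set S) ∩ C, hq.2.2.2.1 B B.2 C C.2⟩, ?_, ?_⟩
      · exact Set.inter_subset_inter_left _ (closure_mono (Set.image_mono Set.inter_subset_left))
      · exact Set.inter_subset_inter_left _ (closure_mono (Set.image_mono Set.inter_subset_right))
    · intro B
      exact hcon B B.2
  rw [← Set.iInter_inter, ← core_eq_iInter] at hne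
  rw [h] at hne
  exact Set.not_nonempty_empty hne

set_option maxHeartbeats 1000000 in
/-- The key separation lemma: disjoint closed sets in `S^F` can be separated by a zero set. -/
theorem sep_lemma {P Q : Set (specF S F)} (hP : IsClosed P) (hQ : IsClosed Q)
    (hPQ : Disjoint P Q) :
    ∃ H ∈ ZSet S F, ∃ V : Set (specF S F), IsOpen V ∧ P ⊆ V ∧
      (∀ s : S, epsF S F s ∈ V → s ∈ H) ∧ P ⊆ interior (epsCl S F H) ∧
      epsCl S F H ∩ Q = ∅ := by
  haveI := (specF_instances S F).1
  haveI := (specF_instances S F).2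
  obtain ⟨V, hVopen, hPV, hVQ⟩ := normal_exists_closure_subset hP hQ.isOpen_compl
    (hPQ.subset_compl_right)
  obtain ⟨g, hg0, hg1, -⟩ := exists_continuous_zero_one_of_isClosed
    isClosed_closure hQ (Set.disjoint_left.mpr fun x hx hxQ => hVQ hx hxQ)
  obtain ⟨f, hf⟩ := gelfand_surj S F
    ⟨fun x => (g x : ℂ), Complex.continuous_ofReal.comp g.continuous⟩
  have key : ∀ s : S, (f : S →ᵇ ℂ) s = (g (epsF S F s) : ℂ) := by
    intro s
    rw [← epsF_apply S F s f, hf]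
    rfl
  refine ⟨{s | (f : S →ᵇ ℂ) s = 0}, ⟨f, f.2, rfl⟩, V, hVopen, hPV, ?_, ?_, ?_⟩
  · intro s hs
    have : g (epsF S F s) = 0 := hg0 (subset_closure hs)
    simp [Set.mem_setOf_eq, key s, this]
  · refine hPV.trans (hVopen.subset_interior_iff.mpr ?_)
    intro x hx
    have hx' : x ∈ closure (V ∩ Set.range (epsF S F)) :=
      (eps_dense S F).open_subset_closure_inter hVopen hx
    refine closure_mono ?_ hx'
    rintro y ⟨hyV, s, rfl⟩
    have : g (epsF S F s) = 0 := hg0 (subset_closure hyV)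
    exact ⟨s, by simp [Set.mem_setOf_eq, key s, this], rfl⟩
  · have hsub : epsCl S F {s | (f : S →ᵇ ℂ) s = 0} ⊆ {x | (g x : ℂ) = 0} := by
      refine closure_minimal ?_ (isClosed_eq (Complex.continuous_ofReal.comp g.continuous)
        continuous_const)
      rintro y ⟨s, hs, rfl⟩
      have := key s
      rw [Set.mem_setOf_eq] at hs
      rw [hs] at this
      exact this.symm
    rw [Set.eq_empty_iff_forall_notMem]
    rintro x ⟨hx1, hx2⟩
    have h0 : (g x : ℂ) = 0 := hsub hx1
    have h1 : g x = 1 := hg1 hx2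
    rw [h1] at h0
    simp at h0

/-- A zero set meeting every member of a z-ultrafilter belongs to it. -/
theorem mem_of_meets {p : Set (Set S)} (hp : p ∈ zUltra S F) {Z : Set S}
    (hZ : Z ∈ ZSet S F) (h : ∀ B ∈ p, (B ∩ Z).Nonempty) : Z ∈ p := by
  set q : Set (Set S) := {Y | Y ∈ ZSet S F ∧ ∃ B ∈ p, B ∩ Z ⊆ Y} with hqdef
  have hq : IsZFilter S F q := by
    refine ⟨fun Y hY => hY.1, ?_, ?_, ?_, ?_⟩
    · rintro ⟨-, B, hB, hsub⟩
      exact Set.not_nonempty_empty ((h B hB).mono hsub)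
    · exact ⟨univ_mem_ZSet S F, Set.univ, hp.1.2.2.1, Set.subset_univ _⟩
    · rintro Y1 ⟨hY1, B1, hB1, hs1⟩ Y2 ⟨hY2, B2, hB2, hs2⟩
      refine ⟨inter_mem_ZSet S F hY1 hY2, B1 ∩ B2, hp.1.2.2.2.1 B1 hB1 B2 hB2, ?_⟩
      rintro x ⟨⟨hx1, hx2⟩, hxZ⟩
      exact ⟨hs1 ⟨hx1, hxZ⟩, hs2 ⟨hx2, hxZ⟩⟩
    · rintro Y ⟨hY, B, hB, hsub⟩ Y' hY' hYY'
      exact ⟨hY', B, hB, hsub.trans hYY'⟩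
  have hpq : p ⊆ q := fun B hB => ⟨hp.1.1 hB, B, hB, Set.inter_subset_left⟩
  have := hp.2 q hq hpq
  rw [← this]
  exact ⟨hZ, Set.univ, hp.1.2.2.1, fun x hx => hx.2⟩

theorem core_subsingleton {p : Set (Set S)} (hp : p ∈ zUltra S F) :
    (core S F p).Subsingleton := by
  intro μ hμ ν hν
  by_contra hne
  obtain ⟨H, hHZ, V, hVopen, hμV, hVH, -, hHν⟩ :=
    sep_lemma S F (isClosed_singleton (x := μ)) (isClosed_singleton (x := ν))
      (Set.disjoint_singleton.mpr hne)
  have hνH : ν ∉ epsCl S F H := fun hx =>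
    Set.eq_empty_iff_forall_notMem.mp hHν ν ⟨hx, rfl⟩
  obtain ⟨H', hH'Z, V', hV'open, hνV', hV'H', -, hH'H⟩ :=
    sep_lemma S F (isClosed_singleton (x := ν)) isClosed_closure
      (Set.disjoint_singleton_left.mpr hνH)
  have hmeet : ∀ (W : Set (specF S F)) (x : specF S F), IsOpen W → x ∈ W →
      (∀ s : S, epsF S F s ∈ W → s ∈ H ∨ s ∈ H') → x ∈ core S F p →
      True := fun _ _ _ _ _ _ => trivial
  have hHp : H ∈ p := by
    refine mem_of_meets S F hp hHZ fun B hB => ?_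
    have hcl : μ ∈ epsCl S F B := (mem_core_iff S F).mp hμ B hB
    obtain ⟨x, hxV, s, hsB, rfl⟩ := mem_closure_iff.mp hcl V hVopen (hμV rfl)
    exact ⟨s, hsB, hVH s hxV⟩
  have hH'p : H' ∈ p := by
    refine mem_of_meets S F hp hH'Z fun B hB => ?_
    have hcl : ν ∈ epsCl S F B := (mem_core_iff S F).mp hν B hB
    obtain ⟨x, hxV, s, hsB, rfl⟩ := mem_closure_iff.mp hcl V' hV'open (hνV' rfl)
    exact ⟨s, hsB, hV'H' s hxV⟩
  have hint : H ∩ H' ∈ p := hp.1.2.2.2.1 H hHp H' hH'p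
  have hempty : H ∩ H' = ∅ := by
    rw [Set.eq_empty_iff_forall_notMem]
    rintro s ⟨hsH, hsH'⟩
    have h1 : epsF S F s ∈ epsCl S F H := subset_closure ⟨s, hsH, rfl⟩
    have h2 : epsF S F s ∈ epsCl S F H' := subset_closure ⟨s, hsH', rfl⟩
    exact Set.eq_empty_iff_forall_notMem.mp hH'H _ ⟨h2, h1⟩
  rw [hempty] at hint
  exact hp.1.2.1 hint

theorem core_eq_singleton {p : Set (Set S)} (hp : p ∈ zUltra S F) :
    ∃ μ, core S F p = {μ} := by
  obtain ⟨μ, hμ⟩ := core_nonempty S F hp.1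
  exact ⟨μ, (core_subsingleton S F hp).eq_singleton_of_mem hμ⟩

/-- Every point of `core L` is realized as the core of a z-ultrafilter containing `L`. -/
theorem exists_ultra_core {L : Set (Set S)} (hL : IsZFilter S F L) {ν : specF S F}
    (hν : ν ∈ core S F L) : ∃ p ∈ zUltra S F, L ⊆ p ∧ core S F p = {ν} := by
  set D : Set (Set S) :=
    {H | H ∈ ZSet S F ∧ ∃ V, IsOpen V ∧ ν ∈ V ∧ ∀ s : S, epsF S F s ∈ V → s ∈ H} with hDdef
  have hunivD : Set.univ ∈ D :=
    ⟨univ_mem_ZSet S F, Set.univ, isOpen_univ, trivial, fun _ _ => trivial⟩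
  have hne : ∀ B ∈ L, ∀ H ∈ D, (B ∩ H).Nonempty := by
    rintro B hB H ⟨hHZ, V, hVopen, hνV, hVH⟩
    have hcl : ν ∈ epsCl S F B := (mem_core_iff S F).mp hν B hB
    obtain ⟨x, hxV, s, hsB, rfl⟩ := mem_closure_iff.mp hcl V hVopen hνV
    exact ⟨s, hsB, hVH s hxV⟩
  set q : Set (Set S) := {Z | Z ∈ ZSet S F ∧ ∃ B ∈ L, ∃ H ∈ D, B ∩ H ⊆ Z} with hqdef
  have hq : IsZFilter S F q := by
    refine ⟨fun Y hY => hY.1, ?_, ?_, ?_, ?_⟩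
    · rintro ⟨-, B, hB, H, hH, hsub⟩
      exact Set.not_nonempty_empty ((hne B hB H hH).mono hsub)
    · exact ⟨univ_mem_ZSet S F, Set.univ, hL.2.2.1, Set.univ, hunivD, Set.subset_univ _⟩
    · rintro Y1 ⟨hY1, B1, hB1, H1, hH1, hs1⟩ Y2 ⟨hY2, B2, hB2, H2, hH2, hs2⟩
      refine ⟨inter_mem_ZSet S F hY1 hY2, B1 ∩ B2, hL.2.2.2.1 B1 hB1 B2 hB2,
        H1 ∩ H2, ?_, ?_⟩
      · obtain ⟨hH1Z, V1, hV1, hν1, hVH1⟩ := hH1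
        obtain ⟨hH2Z, V2, hV2, hν2, hVH2⟩ := hH2
        exact ⟨inter_mem_ZSet S F hH1Z hH2Z, V1 ∩ V2, hV1.inter hV2, ⟨hν1, hν2⟩,
          fun s hs => ⟨hVH1 s hs.1, hVH2 s hs.2⟩⟩
      · rintro x ⟨⟨hb1, hb2⟩, hh1, hh2⟩
        exact ⟨hs1 ⟨hb1, hh1⟩, hs2 ⟨hb2, hh2⟩⟩
    · rintro Y ⟨hY, B, hB, H, hH, hsub⟩ Y' hY' hYY'
      exact ⟨hY', B, hB, H, hH, hsub.trans hYY'⟩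
  obtain ⟨p, hp, hqp⟩ := exists_ultra S F hq
  have hLp : L ⊆ p := fun B hB =>
    hqp ⟨hL.1 hB, B, hB, Set.univ, hunivD, Set.inter_subset_left⟩
  have hDp : D ⊆ p := fun H hH =>
    hqp ⟨hH.1, Set.univ, hL.2.2.1, H, hH, Set.inter_subset_right⟩
  refine ⟨p, hp, hLp, ?_⟩
  have hsub : core S F p ⊆ {ν} := by
    intro x hx
    by_contra hxν
    obtain ⟨H, hHZ, V, hVopen, hνV, hVH, -, hHx⟩ :=
      sep_lemma S F (isClosed_singleton (x := ν)) (isClosed_singleton (x := x))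
        (Set.disjoint_singleton.mpr fun h => hxν h.symm)
    have hHD : H ∈ D := ⟨hHZ, V, hVopen, hνV rfl, hVH⟩
    have : x ∈ epsCl S F H := (mem_core_iff S F).mp hx H (hDp hHD)
    exact Set.eq_empty_iff_forall_notMem.mp hHx x ⟨this, rfl⟩
  exact (core_nonempty S F hp.1).subset_singleton_iff.mp hsub

theorem barSet_subset_core (L : Set (Set S)) : barSet S F L ⊆ core S F L := by
  rintro μ ⟨p, hp, hLp, hcore⟩
  have hμp : μ ∈ core S F p := by rw [hcore]; rfl
  exact (mem_core_iff S F).mpr fun B hB => (mem_core_iff S F).mp hμp B (hLp hB)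

theorem barSet_eq_core {L : Set (Set S)} (hL : IsZFilter S F L) :
    barSet S F L = core S F L := by
  refine subset_antisymm (barSet_subset_core S F L) fun ν hν => ?_
  obtain ⟨p, hp, hLp, hcore⟩ := exists_ultra_core S F hL hν
  exact ⟨p, hp, hLp, hcore⟩

/-- Realization of an arbitrary point of the spectrum as the core of a z-ultrafilter. -/
theorem exists_ultra_point (ν : specF S F) :
    ∃ p ∈ zUltra S F, core S F p = {ν} := by
  have hSne : Nonempty S := by
    by_contra hS
    rw [not_nonempty_iff] at hS
    have h10 : (1 : S →ᵇ ℂ) = 0 := by ext s; exact (hS.false s).elim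
    have hchar : (ν : WeakDual ℂ F.carrier) 1 = 1 := map_one ν
    rw [show (1 : F.carrier) = 0 from Subtype.ext (by simp [h10]), map_zero] at hchar
    exact one_ne_zero hchar.symm
  have huniv : IsZFilter S F {Set.univ} := by
    refine ⟨fun A hA => hA ▸ univ_mem_ZSet S F, ?_, rfl, ?_, ?_⟩
    · intro h
      rw [Set.mem_singleton_iff] at h
      exact (Set.univ_nonempty.ne_empty h.symm)
    · rintro A rfl B rfl
      simp
    · rintro A rfl B - hAB
      exact Set.eq_univ_of_univ_subset hAB ▸ rfl
  have hν : ν ∈ core S F {Set.univ} := by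
    refine (mem_core_iff S F).mpr ?_
    rintro B rfl
    have : epsCl S F Set.univ = closure (Set.range (epsF S F)) := by
      rw [epsCl, Set.image_univ]
    rw [this, (eps_dense S F).closure_eq]
    trivial
  obtain ⟨p, hp, -, hcore⟩ := exists_ultra_core S F huniv hν
  exact ⟨p, hp, hcore⟩

/-- Consequence of one disjunct of condition (b). -/
theorem lemD {D : Set (Set S)} {A' : Set S}
    (h : ∀ H ∈ ZSet S F, (interior (epsCl S F A'))ᶜ ⊆ interior (epsCl S F H) → H ∈ D) :
    core S F D ⊆ (interior (epsCl S F A'))ᶜ := by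
  intro x hx
  by_contra hxi
  rw [Set.notMem_compl_iff] at hxi
  obtain ⟨H, hHZ, V, -, -, -, hPint, hHx⟩ :=
    sep_lemma S F (isOpen_interior.isClosed_compl) (isClosed_singleton (x := x))
      (Set.disjoint_singleton_right.mpr (by simpa using hxi))
  have hHD : H ∈ D := h H hHZ hPint
  have : x ∈ epsCl S F H := (mem_core_iff S F).mp hx H hHD
  exact Set.eq_empty_iff_forall_notMem.mp hHx x ⟨this, rfl⟩

/-- Uniqueness: a z-ultrafilter contains at most one member of `Γ`. -/
theorem unique_in_ultra {Γ : Set (Set (Set S))} (hQ : IsQuotientOf S F Γ)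
    {p : Set (Set S)} (hp : p ∈ zUltra S F) {μ : specF S F} (hcore : core S F p = {μ})
    {L K : Set (Set S)} (hLΓ : L ∈ Γ) (hKΓ : K ∈ Γ) (hLp : L ⊆ p) (hKp : K ⊆ p) :
    L = K := by
  by_contra hne
  obtain ⟨A, hA, B, hB, hdich⟩ := hQ.2.2 L hLΓ K hKΓ hne
  have hμp : μ ∈ core S F p := by rw [hcore]; rfl
  have hμL : μ ∈ core S F L :=
    (mem_core_iff S F).mpr fun Z hZ => (mem_core_iff S F).mp hμp Z (hLp hZ)
  have hμbarL : μ ∈ barSet S F L := ⟨p, hp, hLp, hcore⟩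
  have hμbarK : μ ∈ barSet S F K := ⟨p, hp, hKp, hcore⟩
  have hμA : μ ∈ interior (epsCl S F A) := hA.2 hμbarL
  have hμB : μ ∈ interior (epsCl S F B) := hB.2 hμbarK
  rcases hdich L hLΓ with h1 | h2
  · exact lemD S F h1 hμL hμA
  · exact lemD S F h2 hμL hμB

end Aux

/-- Corollary 3.12. -/
theorem statement6
    (hr : ∀ s : S, Continuous (fun t => t * s))
    (hF : (F.carrier : Set (S →ᵇ ℂ)) = LMCset S hl)
    (Γ : Set (Set (Set S))) (hQ : IsQuotientOf S F Γ)
    (γ : specF S F → Γ) (hγ : IsGamma S F Γ γ) :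
    @IsQuotientMap (specF S F) Γ inferInstance (tauStar S F Γ) γ := by
  classical
  have hzf : ∀ L : Set (Set S), L ∈ Γ → IsZFilter S F L := fun L h => (hQ.1 L h).1
  have tilde_sub : ∀ p ∈ zUltra S F, tilde S F p ⊆ p := fun p hp =>
    Set.sInter_subset_of_mem ⟨hp, rfl⟩
  have self_bar : ∀ ν : specF S F, ν ∈ barSet S F (γ ν : Set (Set S)) := by
    intro ν
    obtain ⟨p, hp, hcore⟩ := exists_ultra_point S F ν
    exact ⟨p, hp, (hγ ν p hp hcore).trans (tilde_sub p hp), hcore⟩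
  have fiber : ∀ (ν : specF S F) (L : Γ), γ ν = L ↔ ν ∈ barSet S F (L : Set (Set S)) := by
    intro ν L
    constructor
    · rintro rfl; exact self_bar ν
    · rintro ⟨p, hp, hLp, hcore⟩
      have h1 : (γ ν : Set (Set S)) ⊆ p := (hγ ν p hp hcore).trans (tilde_sub p hp)
      exact Subtype.ext (unique_in_ultra S F hQ hp hcore (γ ν).2 L.2 h1 hLp)
  have self_core : ∀ ν : specF S F, ν ∈ core S F (γ ν : Set (Set S)) := fun ν =>
    barSet_subset_core S F _ (self_bar ν)
  have star_mem : ∀ (A : Set S) (L : Γ), L ∈ (starSet S F Γ A)ᶜ ↔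
      core S F (L : Set (Set S)) ∩ epsCl S F A = ∅ := by
    intro A L
    simp only [starSet, Set.mem_compl_iff, Set.mem_setOf_eq, Set.not_nonempty_iff_eq_empty,
      barSet_eq_core S F (hzf _ L.2)]
  refine @IsQuotientMap.mk (specF S F) Γ _ (tauStar S F Γ) γ ?_ ?_
  swap
  · -- surjectivity
    intro L
    obtain ⟨p, hp, hLp⟩ := exists_ultra S F (hzf _ L.2)
    obtain ⟨μ, hμ⟩ := core_eq_singleton S F hp
    exact ⟨μ, (fiber μ L).mpr ⟨p, hp, hLp, hμ⟩⟩
  · -- the topology is the quotient topology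
    have hard : ∀ A ∈ ZSet S F, IsOpen (γ ⁻¹' (starSet S F Γ A)ᶜ) := by
      intro A hAZ
      have hchar : ∀ ν : specF S F, ν ∈ γ ⁻¹' (starSet S F Γ A)ᶜ ↔
          core S F (γ ν : Set (Set S)) ∩ epsCl S F A = ∅ := by
        intro ν
        rw [Set.mem_preimage, star_mem A (γ ν)]
      rw [isOpen_iff_forall_mem_open]
      intro ν₀ hν₀
      set L₀ := γ ν₀ with hL₀def
      have hK₀A : core S F (L₀ : Set (Set S)) ∩ epsCl S F A = ∅ := (hchar ν₀).mp hν₀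
      obtain ⟨B₀, hB₀L, hB₀A⟩ :=
        exists_disjoint_of_core_disjoint S F (hzf _ L₀.2) isClosed_closure hK₀A
      have hcoreclosed : IsClosed (core S F (L₀ : Set (Set S))) :=
        isClosed_biInter fun B _ => isClosed_closure
      obtain ⟨E₀, hE₀Z, V₀, hV₀open, hPV₀, hV₀mem, hPint₀, hE₀A⟩ :=
        sep_lemma S F (P := epsCl S F B₀ ∪ core S F (L₀ : Set (Set S)))
          (Q := epsCl S F A) (isClosed_closure.union hcoreclosed) isClosed_closure
          (by
            rw [Set.disjoint_left]
            rintro x (hx | hx) hxA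
            · exact Set.eq_empty_iff_forall_notMem.mp hB₀A x ⟨hx, hxA⟩
            · exact Set.eq_empty_iff_forall_notMem.mp hK₀A x ⟨hx, hxA⟩)
      have hE₀L₀ : E₀ ∈ (L₀ : Set (Set S)) := by
        refine (hzf _ L₀.2).2.2.2.2 B₀ hB₀L E₀ hE₀Z fun s hs => ?_
        exact hV₀mem s (hPV₀ (Or.inl (subset_closure ⟨s, hs, rfl⟩)))
      have hcoreE₀ : core S F (L₀ : Set (Set S)) ⊆ interior (epsCl S F E₀) :=
        fun x hx => hPint₀ (Or.inr hx)
      have hch : ∀ C, C ∈ Γ ∧ C ≠ (L₀ : Set (Set S)) →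
          ∃ AB : Set S × Set S, AB.1 ∈ circA S F C ∧ AB.2 ∈ circA S F (L₀ : Set (Set S)) ∧
            ∀ D ∈ Γ,
              (∀ H ∈ ZSet S F,
                (interior (epsCl S F AB.1))ᶜ ⊆ interior (epsCl S F H) → H ∈ D) ∨
              (∀ T ∈ ZSet S F,
                (interior (epsCl S F AB.2))ᶜ ⊆ interior (epsCl S F T) → T ∈ D) := by
        rintro C ⟨hCΓ, hCne⟩
        obtain ⟨A', hA', B', hB', hd⟩ := hQ.2.2 C hCΓ (L₀ : Set (Set S)) L₀.2 hCne
        exact ⟨(A', B'), hA', hB', hd⟩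
      set Ac : Set (Set S) → Set S := fun C =>
        if h : C ∈ Γ ∧ C ≠ (L₀ : Set (Set S)) then (Classical.choose (hch C h)).1 else E₀
        with hAcdef
      set Bc : Set (Set S) → Set S := fun C =>
        if h : C ∈ Γ ∧ C ≠ (L₀ : Set (Set S)) then (Classical.choose (hch C h)).2 else E₀
        with hBcdef
      have hAc : ∀ C (h : C ∈ Γ ∧ C ≠ (L₀ : Set (Set S))),
          Ac C ∈ circA S F C ∧ Bc C ∈ circA S F (L₀ : Set (Set S)) ∧
          ∀ D ∈ Γ,
            (∀ H ∈ ZSet S F,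
              (interior (epsCl S F (Ac C)))ᶜ ⊆ interior (epsCl S F H) → H ∈ D) ∨
            (∀ T ∈ ZSet S F,
              (interior (epsCl S F (Bc C)))ᶜ ⊆ interior (epsCl S F T) → T ∈ D) := by
        intro C h
        have hs := Classical.choose_spec (hch C h)
        rw [hAcdef, hBcdef]
        simp only [dif_pos h]
        exact hs
      set f : Set (Set S) → Set S := fun C =>
        if C ∈ Γ ∧ C ≠ (L₀ : Set (Set S)) then Ac C else E₀ with hfdef
      have hTCF : IsTCF S F Γ f := by
        intro C hC
        by_cases h : C ∈ Γ ∧ C ≠ (L₀ : Set (Set S))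
        · have hf : f C = Ac C := by rw [hfdef]; simp only [if_pos h]
          rw [hf]
          exact ⟨(hAc C h).1.1, (hAc C h).1.2⟩
        · have hCL : C = (L₀ : Set (Set S)) := by
            by_contra hne
            exact h ⟨hC, hne⟩
          have hf : f C = E₀ := by rw [hfdef]; simp only [if_neg h]
          rw [hf, hCL]
          refine ⟨hE₀L₀, ?_⟩
          rw [barSet_eq_core S F (hzf _ L₀.2)]
          exact hcoreE₀
      obtain ⟨FF, hFFΓ, hcover⟩ := hQ.2.1 f hTCF
      set W : Set (specF S F) := interior (epsCl S F E₀) ∩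
        ⋂ C ∈ (FF : Set (Set (Set S))),
          (if C ∈ Γ ∧ C ≠ (L₀ : Set (Set S)) then interior (epsCl S F (Bc C)) else Set.univ)
        with hWdef
      refine ⟨W, ?_, ?_, ?_⟩
      · intro ν hν
        rw [hWdef] at hν
        obtain ⟨hν1, hν2⟩ := hν
        rw [hchar ν]
        by_cases hD : (γ ν : Set (Set S)) = (L₀ : Set (Set S))
        · rw [hD]; exact hK₀A
        · have hνD : ν ∈ core S F (γ ν : Set (Set S)) := self_core ν
          have key : ∀ C ∈ FF, (C ∈ Γ ∧ C ≠ (L₀ : Set (Set S))) →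
              core S F (γ ν : Set (Set S)) ∩ interior (epsCl S F (Ac C)) = ∅ := by
            intro C hCF hc
            rcases (hAc C hc).2.2 (γ ν : Set (Set S)) (γ ν).2 with h1 | h2
            · have hsub := lemD S F h1
              rw [Set.eq_empty_iff_forall_notMem]
              rintro x ⟨hx1, hx2⟩
              exact hsub hx1 hx2
            · exfalso
              have hsub := lemD S F h2
              have hν2' : ν ∈ interior (epsCl S F (Bc C)) := by
                have hm := Set.mem_iInter₂.mp hν2 C hCF
                rwa [if_pos hc] at hm
              exact hsub hνD hν2'
          have hDE : core S F (γ ν : Set (Set S)) ⊆ epsCl S F E₀ := by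
            intro x hx
            have hxU : x ∈ (Set.univ : Set (specF S F)) := trivial
            rw [hcover] at hxU
            obtain ⟨C, hCF, hxC⟩ := Set.mem_iUnion₂.mp hxU
            by_cases hc : C ∈ Γ ∧ C ≠ (L₀ : Set (Set S))
            · exfalso
              have hfC : f C = Ac C := by rw [hfdef]; simp only [if_pos hc]
              rw [hfC] at hxC
              exact Set.eq_empty_iff_forall_notMem.mp (key C hCF hc) x ⟨hx, hxC⟩
            · have hfC : f C = E₀ := by rw [hfdef]; simp only [if_neg hc]
              rw [hfC] at hxC
              exact interior_subset hxC
          rw [Set.eq_empty_iff_forall_notMem]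
          rintro x ⟨hx1, hx2⟩
          exact Set.eq_empty_iff_forall_notMem.mp hE₀A x ⟨hDE hx1, hx2⟩
      · rw [hWdef]
        refine isOpen_interior.inter ?_
        refine Set.Finite.isOpen_biInter (FF.finite_toSet) fun C hC => ?_
        split
        · exact isOpen_interior
        · exact isOpen_univ
      · rw [hWdef]
        refine ⟨hcoreE₀ (self_core ν₀), ?_⟩
        refine Set.mem_iInter₂.mpr fun C hC => ?_
        by_cases hc : C ∈ Γ ∧ C ≠ (L₀ : Set (Set S))
        · rw [if_pos hc]
          exact (hAc C hc).2.1.2 (self_bar ν₀)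
        · rw [if_neg hc]; trivial
    have easy : ∀ U : Set Γ, IsOpen (γ ⁻¹' U) → IsOpen[tauStar S F Γ] U := by
      intro U hU
      have pick : ∀ L : Γ, L ∈ U → ∃ A, A ∈ ZSet S F ∧ L ∈ (starSet S F Γ A)ᶜ ∧
          (starSet S F Γ A)ᶜ ⊆ U := by
        intro L hLU
        have hfibsub : core S F (L : Set (Set S)) ⊆ γ ⁻¹' U := by
          intro x hx
          have hγx : γ x = L := (fiber x L).mpr (by
            rw [barSet_eq_core S F (hzf _ L.2)]; exact hx)
          rw [Set.mem_preimage, hγx]; exact hLU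
        obtain ⟨H, hHZ, V, hVopen, hPV, hVmem, hPint, hHcore⟩ :=
          sep_lemma S F (P := (γ ⁻¹' U)ᶜ) (Q := core S F (L : Set (Set S)))
            hU.isClosed_compl (isClosed_biInter fun B _ => isClosed_closure)
            (Set.disjoint_left.mpr fun x hx hx' => hx (hfibsub hx'))
        refine ⟨H, hHZ, ?_, ?_⟩
        · rw [star_mem H L, Set.eq_empty_iff_forall_notMem]
          rintro x ⟨hx1, hx2⟩
          exact Set.eq_empty_iff_forall_notMem.mp hHcore x ⟨hx2, hx1⟩
        · intro C hC
          rw [star_mem H C] at hC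
          obtain ⟨x, hx⟩ := core_nonempty S F (hzf _ C.2)
          have hxH : x ∉ epsCl S F H := fun h =>
            Set.eq_empty_iff_forall_notMem.mp hC x ⟨hx, h⟩
          have hxO : x ∈ γ ⁻¹' U := by
            by_contra hxO
            exact hxH (interior_subset (hPint hxO))
          have hγx : γ x = C := (fiber x C).mpr (by
            rw [barSet_eq_core S F (hzf _ C.2)]; exact hx)
          rw [Set.mem_preimage, hγx] at hxO
          exact hxO
      have hUeq : U = ⋃₀ {V | ∃ A, A ∈ ZSet S F ∧ V = (starSet S F Γ A)ᶜ ∧ V ⊆ U} := by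
        apply subset_antisymm
        · intro L hL
          obtain ⟨A, hAZ, hmem, hsub⟩ := pick L hL
          exact ⟨(starSet S F Γ A)ᶜ, ⟨A, hAZ, rfl, hsub⟩, hmem⟩
        · rintro L ⟨V, ⟨A, hAZ, rfl, hsub⟩, hLV⟩
          exact hsub hLV
      rw [hUeq]
      exact TopologicalSpace.GenerateOpen.sUnion _
        (by rintro V ⟨A, hAZ, rfl, -⟩; exact .basic _ ⟨A, hAZ, rfl⟩)
    have hle : TopologicalSpace.coinduced γ inferInstance ≤ tauStar S F Γ :=
      TopologicalSpace.le_generateFrom_iff_subset_isOpen.mpr (by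
        rintro U' ⟨A, hAZ, rfl⟩
        exact isOpen_coinduced.mpr (hard A hAZ))
    refine IsCoinducing.mk (tY := tauStar S F Γ) (TopologicalSpace.ext_iff.mpr fun U => ?_)
    constructor
    · intro hU
      exact hU.mono hle
    · intro hU
      exact easy U (isOpen_coinduced.mp hU)

end
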